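/- Let D ⊂ ℝ² be a convex polygon with boundary vertices p₁, …, p_b fixed, and consider interior points x₁, …, x_m determined by the Tutte barycentric conditions: each x_j equals the average of its neighbors (which may be boundary vertices or other interior points), where the neighbor graph on interior points together with boundary vertices is connected and every interior point is connected through the graph to some boundary vertex. Then the linear system determining x₁, …, x_m has a unique solution, and every solution point x_j lies in the convex hull of {p₁, …, p_b}. -/

import Mathlib

open Finset

private lemma tutte_maxPrin {m b : ℕ}
    (Nb : Fin m → Finset (Fin m ⊕ Fin b))
    (hne : ∀ j, (Nb j).Nonempty)
    (hconn : ∀ j : Fin m, ∃ (l : ℕ) (c : ℕ → Fin m), c 0 = j ∧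
      (∀ i < l, Sum.inl (c (i + 1)) ∈ Nb (c i)) ∧ ∃ q : Fin b, Sum.inr q ∈ Nb (c l))
    (g : Fin m → ℝ) (q : Fin b → ℝ)
    (heq : ∀ j, g j = ((Nb j).card : ℝ)⁻¹ * ∑ k ∈ Nb j, Sum.elim g q k)
    (P : ℝ) (hP : ∀ i, q i ≤ P) :
    ∀ j, g j ≤ P := by
  by_contra h
  push_neg at h
  obtain ⟨j0, hj0⟩ := h
  have hnem : (Finset.univ : Finset (Fin m)).Nonempty := ⟨j0, mem_univ _⟩
  set M := Finset.univ.sup' hnem g with hMdef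
  have hPM : P < M := lt_of_lt_of_le hj0 (Finset.le_sup' g (mem_univ j0))
  have step : ∀ j, g j = M → ∀ k ∈ Nb j, Sum.elim g q k = M := by
    intro j hj k hk
    have hbound : ∀ k' ∈ Nb j, Sum.elim g q k' ≤ M := by
      intro k' _
      cases k' with
      | inl a => exact Finset.le_sup' g (mem_univ a)
      | inr i => exact le_trans (hP i) hPM.le
    have hcard : (0:ℝ) < (Nb j).card := by
      exact_mod_cast Finset.card_pos.mpr (hne j)
    have h1 := heq j
    rw [hj] at h1
    have hsum : ((Nb j).card : ℝ) * M = ∑ k' ∈ Nb j, Sum.elim g q k' := by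
      rw [h1, ← mul_assoc, mul_inv_cancel₀ (ne_of_gt hcard), one_mul]
    by_contra hne'
    have hlt : Sum.elim g q k < M := lt_of_le_of_ne (hbound k hk) hne'
    have hstrict : ∑ k' ∈ Nb j, Sum.elim g q k' < ∑ _k' ∈ Nb j, M :=
      Finset.sum_lt_sum hbound ⟨k, hk, hlt⟩
    rw [Finset.sum_const, nsmul_eq_mul] at hstrict
    linarith [hsum ▸ hstrict]
  obtain ⟨jM, _, hjM⟩ := Finset.exists_mem_eq_sup' hnem g
  obtain ⟨l, c, hc0, hstep, qb, hqb⟩ := hconn jM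
  have hchain : ∀ i, i ≤ l → g (c i) = M := by
    intro i
    induction i with
    | zero => intro _; rw [hc0, ← hjM]
    | succ n ih =>
      intro hn
      have h1 := step (c n) (ih (le_of_lt (Nat.lt_of_succ_le hn))) _
        (hstep n (Nat.lt_of_succ_le hn))
      simpa using h1
  have hfin := step (c l) (hchain l le_rfl) _ hqb
  simp only [Sum.elim_inr] at hfin
  linarith [hP qb]

private lemma tutte_homog_zero {m b : ℕ}
    (Nb : Fin m → Finset (Fin m ⊕ Fin b))
    (hne : ∀ j, (Nb j).Nonempty)
    (hconn : ∀ j : Fin m, ∃ (l : ℕ) (c : ℕ → Fin m), c 0 = j ∧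
      (∀ i < l, Sum.inl (c (i + 1)) ∈ Nb (c i)) ∧ ∃ q : Fin b, Sum.inr q ∈ Nb (c l))
    (d : Fin m → EuclideanSpace ℝ (Fin 2))
    (hd : ∀ j, d j = ((Nb j).card : ℝ)⁻¹ •
      ∑ k ∈ Nb j, Sum.elim d (0 : Fin b → EuclideanSpace ℝ (Fin 2)) k) :
    d = 0 := by
  funext j
  have heq : ∀ j', (inner ℝ (d j) (d j') : ℝ) =
      ((Nb j').card : ℝ)⁻¹ * ∑ k ∈ Nb j',
        Sum.elim (fun a => (inner ℝ (d j) (d a) : ℝ)) (fun _ : Fin b => (0:ℝ)) k := by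
    intro j'
    have h1 : (inner ℝ (d j) (d j') : ℝ) = inner ℝ (d j)
        (((Nb j').card : ℝ)⁻¹ • ∑ k ∈ Nb j',
          Sum.elim d (0 : Fin b → EuclideanSpace ℝ (Fin 2)) k) := by
      rw [← hd j']
    rw [h1, real_inner_smul_right, inner_sum]
    congr 1
    refine Finset.sum_congr rfl fun k _ => ?_
    cases k with
    | inl a => simp
    | inr i => simp
  have h := tutte_maxPrin Nb hne hconn
    (fun a => (inner ℝ (d j) (d a) : ℝ)) (fun _ => (0:ℝ)) heq 0 (fun _ => le_rfl) j
  have : d j = 0 := by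
    have := real_inner_self_nonpos.mp h
    exact this
  simpa using this

private lemma tutte_elim_split {m b : ℕ} (x : Fin m → EuclideanSpace ℝ (Fin 2))
    (p : Fin b → EuclideanSpace ℝ (Fin 2)) (k : Fin m ⊕ Fin b) :
    Sum.elim x p k = Sum.elim x (0 : Fin b → EuclideanSpace ℝ (Fin 2)) k +
      Sum.elim (0 : Fin m → EuclideanSpace ℝ (Fin 2)) p k := by
  cases k <;> simp

/-- (Tutte embedding linear system.) Fix boundary positions `p 1, …, p b` of a
convex polygon in the plane and, for each interior index `j`, a nonempty set `Nb j` of neighbors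
(interior or boundary indices), such that every interior vertex is connected through the
neighbor graph to some boundary vertex.  Then the barycentric (Tutte) system
`x j = (1/|Nb j|)·Σ_{k ∈ Nb j} y k` (with `y k = x k` for interior and `y k = p k` for boundary
neighbors) has a unique solution, and every solution point lies in the convex hull of the
boundary positions. -/
theorem tutte_system_unique_and_convex
    {b m : ℕ} (p : Fin b → EuclideanSpace ℝ (Fin 2))
    (Nb : Fin m → Finset (Fin m ⊕ Fin b))
    (hne : ∀ j, (Nb j).Nonempty)
    (hconn : ∀ j : Fin m, ∃ (l : ℕ) (c : ℕ → Fin m), c 0 = j ∧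
      (∀ i < l, Sum.inl (c (i + 1)) ∈ Nb (c i)) ∧ ∃ q : Fin b, Sum.inr q ∈ Nb (c l))
    (Sat : (Fin m → EuclideanSpace ℝ (Fin 2)) → Prop)
    (hSat : ∀ x, Sat x ↔ ∀ j : Fin m,
      x j = ((Nb j).card : ℝ)⁻¹ • ∑ k ∈ Nb j, Sum.elim x p k) :
    (∃! x : Fin m → EuclideanSpace ℝ (Fin 2), Sat x) ∧
    ∀ x : Fin m → EuclideanSpace ℝ (Fin 2), Sat x →
      ∀ j : Fin m, x j ∈ convexHull ℝ (Set.range p) := by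
  -- The linear map of the system
  let T : (Fin m → EuclideanSpace ℝ (Fin 2)) →ₗ[ℝ] (Fin m → EuclideanSpace ℝ (Fin 2)) :=
    { toFun := fun x j => x j - ((Nb j).card : ℝ)⁻¹ •
        ∑ k ∈ Nb j, Sum.elim x (0 : Fin b → EuclideanSpace ℝ (Fin 2)) k
      map_add' := by
        intro x y
        funext j
        have hsplit : ∀ k ∈ Nb j, Sum.elim (x + y) (0 : Fin b → EuclideanSpace ℝ (Fin 2)) k =
            Sum.elim x (0 : Fin b → EuclideanSpace ℝ (Fin 2)) k + Sum.elim y (0 : Fin b → EuclideanSpace ℝ (Fin 2)) k := by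
          intro k _; cases k <;> simp
        rw [Finset.sum_congr rfl hsplit, Finset.sum_add_distrib, smul_add]
        simp only [Pi.add_apply]
        abel
      map_smul' := by
        intro r x
        funext j
        have hsplit : ∀ k ∈ Nb j, Sum.elim (r • x) (0 : Fin b → EuclideanSpace ℝ (Fin 2)) k =
            r • Sum.elim x (0 : Fin b → EuclideanSpace ℝ (Fin 2)) k := by
          intro k _; cases k <;> simp
        rw [Finset.sum_congr rfl hsplit, ← Finset.smul_sum]
        simp only [Pi.smul_apply, RingHom.id_apply, smul_sub, smul_comm r] }
  let v : Fin m → EuclideanSpace ℝ (Fin 2) := fun j => ((Nb j).card : ℝ)⁻¹ •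
    ∑ k ∈ Nb j, Sum.elim (0 : Fin m → EuclideanSpace ℝ (Fin 2)) p k
  have hSatT : ∀ x, Sat x ↔ T x = v := by
    intro x
    rw [hSat]
    constructor
    · intro hx
      funext j
      have := hx j
      simp only [T, LinearMap.coe_mk, AddHom.coe_mk, v]
      rw [Finset.sum_congr rfl (fun k _ => tutte_elim_split x p k),
        Finset.sum_add_distrib, smul_add] at this
      rw [sub_eq_iff_eq_add']
      rw [this]
    · intro hx j
      have := congrFun hx j
      simp only [T, LinearMap.coe_mk, AddHom.coe_mk, v] at this
      rw [sub_eq_iff_eq_add'] at this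
      rw [Finset.sum_congr rfl (fun k _ => tutte_elim_split x p k),
        Finset.sum_add_distrib, smul_add, this]
  have hinj : Function.Injective T := by
    rw [← LinearMap.ker_eq_bot, LinearMap.ker_eq_bot']
    intro d hd
    apply tutte_homog_zero Nb hne hconn
    intro j
    have := congrFun hd j
    simp only [T, LinearMap.coe_mk, AddHom.coe_mk, Pi.zero_apply] at this
    exact sub_eq_zero.mp this
  have hsurj : Function.Surjective T := LinearMap.injective_iff_surjective.mp hinj
  obtain ⟨x0, hx0⟩ := hsurj v
  have hmax : ∀ x, Sat x → ∀ (f : EuclideanSpace ℝ (Fin 2) →L[ℝ] ℝ) (P : ℝ), (∀ i, f (p i) ≤ P) →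
      ∀ j, f (x j) ≤ P := by
    intro x hx f P hP
    apply tutte_maxPrin Nb hne hconn (fun a => f (x a)) (fun i => f (p i)) _ P hP
    intro j
    have := (hSat x).mp hx j
    rw [this, map_smul, map_sum]
    simp only [smul_eq_mul]
    congr 1
    refine Finset.sum_congr rfl fun k _ => ?_
    cases k <;> simp
  refine ⟨⟨x0, (hSatT x0).mpr hx0, fun y hy => hinj (by rw [hx0, ← (hSatT y).mp hy])⟩, ?_⟩
  intro x hx j
  by_contra hnotin
  have hfin : (Set.range p).Finite := Set.finite_range p
  have hclosed : IsClosed (convexHull ℝ (Set.range p)) := hfin.isClosed_convexHull ℝ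
  have hconv : Convex ℝ (convexHull ℝ (Set.range p)) := convex_convexHull ℝ _
  obtain ⟨f, u, hfu, hux⟩ := geometric_hahn_banach_closed_point hconv hclosed hnotin
  have hPle : ∀ i, f (p i) ≤ u := fun i =>
    (hfu _ (subset_convexHull ℝ _ (Set.mem_range_self i))).le
  have := hmax x hx f u hPle j
  linarith
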